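/- Under the stated setup and algorithmic hypotheses, every limit point (A*, Z*, H*) of the sequence (A^k, Z^k, H^k) satisfies Z* ∈ S₁, H* ∈ S₂, and the following coordinatewise minimality conditions: f(A*, Z*, H*) ≤ f(A*, Z*, H) for every H ∈ S₂; f(A*, Z*, H*) ≤ f(A, Z*, H*) for every A ∈ ℝ^{n×n}; and f(A*, Z*, H*) ≤ f(A*, Z, H*) for every Z ∈ S₁. -/

import Mathlib

open Matrix BigOperators Filter Topology

/-- Frobenius norm of a real matrix. -/
noncomputable def frob {m n : ℕ} (W : Matrix (Fin m) (Fin n) ℝ) : ℝ :=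
  Real.sqrt (∑ i, ∑ j, (W i j) ^ 2)

/-- Laplacian `L_S = D_S - (|S| + |S|ᵀ)/2` of a square real matrix `S`. -/
noncomputable def lap {n : ℕ} (S : Matrix (Fin n) (Fin n) ℝ) : Matrix (Fin n) (Fin n) ℝ :=
  Matrix.diagonal (fun i => ∑ j, (|S i j| + |S j i|) / 2)
    - (1 / 2 : ℝ) • (S.map (fun x => |x|) + (S.map (fun x => |x|))ᵀ)

/-- The objective `f(A, Z, H)` of the penalized DGSL model. -/
noncomputable def fObj {n k d : ℕ} (X : Matrix (Fin d) (Fin n) ℝ)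
    (W M C : Matrix (Fin n) (Fin n) ℝ) (lam lamZ lamM a1 a2 : ℝ)
    (A Z : Matrix (Fin n) (Fin n) ℝ) (H : Matrix (Fin k) (Fin n) ℝ) : ℝ :=
  (1 / 2) * frob (X - X * A) ^ 2 + (lam / 2) * frob (A - Z) ^ 2
    + lamZ * (∑ i, ∑ j, |Z i j|)
    + a1 * trace (H * lap Z * Hᵀ) / trace (H * lap C * Hᵀ)
    + a2 * trace (H * (lap W + lamM • lap M) * Hᵀ) / trace (H * lap C * Hᵀ)

lemma frob_nonneg {m n : ℕ} (W : Matrix (Fin m) (Fin n) ℝ) : 0 ≤ frob W :=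
  Real.sqrt_nonneg _

lemma sum_sq_nonneg' {m n : ℕ} (W : Matrix (Fin m) (Fin n) ℝ) :
    0 ≤ ∑ i, ∑ j, (W i j) ^ 2 :=
  Finset.sum_nonneg fun _ _ => Finset.sum_nonneg fun _ _ => sq_nonneg _

lemma frob_sq {m n : ℕ} (W : Matrix (Fin m) (Fin n) ℝ) :
    frob W ^ 2 = ∑ i, ∑ j, (W i j) ^ 2 :=
  Real.sq_sqrt (sum_sq_nonneg' W)

lemma entry_sq_le_frob_sq {m n : ℕ} (W : Matrix (Fin m) (Fin n) ℝ) (i : Fin m) (j : Fin n) :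
    (W i j) ^ 2 ≤ frob W ^ 2 := by
  rw [frob_sq]
  calc (W i j)^2 ≤ ∑ j', (W i j')^2 :=
        Finset.single_le_sum (fun j' _ => sq_nonneg (W i j')) (Finset.mem_univ j)
    _ ≤ ∑ i', ∑ j', (W i' j')^2 :=
        Finset.single_le_sum (f := fun i' => ∑ j', (W i' j')^2)
          (fun i' _ => Finset.sum_nonneg fun j' _ => sq_nonneg _) (Finset.mem_univ i)

lemma abs_entry_le_frob {m n : ℕ} (W : Matrix (Fin m) (Fin n) ℝ) (i : Fin m) (j : Fin n) :
    |W i j| ≤ frob W := by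
  have := entry_sq_le_frob_sq W i j
  nlinarith [abs_nonneg (W i j), frob_nonneg W, sq_abs (W i j)]

/-- frob convergence to zero implies convergence in the (pi) matrix topology. -/
lemma tendsto_of_frob {m n : ℕ} (Bj : ℕ → Matrix (Fin m) (Fin n) ℝ)
    (B : Matrix (Fin m) (Fin n) ℝ)
    (h : Tendsto (fun j => frob (Bj j - B)) atTop (𝓝 0)) :
    Tendsto Bj atTop (𝓝 B) := by
  refine tendsto_pi_nhds.mpr ?_
  intro i
  rw [tendsto_pi_nhds]
  intro j'
  have h1 : Tendsto (fun j => Bj j i j' - B i j') atTop (𝓝 0) := by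
    refine squeeze_zero_norm (fun t => ?_) h
    simpa [Real.norm_eq_abs] using abs_entry_le_frob (Bj t - B) i j'
  have := h1.add (tendsto_const_nhds (x := B i j'))
  simpa using this

lemma entry_continuous {m n : ℕ} (i : Fin m) (j : Fin n) :
    Continuous fun S : Matrix (Fin m) (Fin n) ℝ => S i j :=
  (continuous_apply j).comp (continuous_apply i)

lemma frob_continuous {m n : ℕ} : Continuous (frob : Matrix (Fin m) (Fin n) ℝ → ℝ) :=
  Real.continuous_sqrt.comp <| continuous_finset_sum _ fun i _ =>
    continuous_finset_sum _ fun j _ => (entry_continuous i j).pow 2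

lemma lap_continuous {n : ℕ} : Continuous (lap : Matrix (Fin n) (Fin n) ℝ → _) := by
  unfold lap
  refine Continuous.sub ?_ ((continuous_const_smul (1 / 2 : ℝ)).comp ?_)
  · exact Continuous.matrix_diagonal <| continuous_pi fun i =>
      continuous_finset_sum _ fun j _ =>
        (((entry_continuous i j).abs.add (entry_continuous j i).abs)).div_const 2
  · exact (continuous_id.matrix_map continuous_abs).add
      (continuous_id.matrix_map continuous_abs).matrix_transpose

lemma trace_form {n k : ℕ} (H : Matrix (Fin k) (Fin n) ℝ) (L : Matrix (Fin n) (Fin n) ℝ) :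
    trace (H * L * Hᵀ) = ∑ i, ∑ j, L i j * (∑ l, H l i * H l j) := by
  rw [Matrix.trace_mul_cycle]
  simp only [Matrix.trace, Matrix.diag, Matrix.mul_apply, Matrix.transpose_apply,
    Finset.sum_mul]
  conv_lhs => rw [Finset.sum_comm]
  refine Finset.sum_congr rfl fun a _ => Finset.sum_congr rfl fun b _ => ?_
  rw [Finset.mul_sum]
  exact Finset.sum_congr rfl fun l _ => by ring

lemma trace_lap {n k : ℕ} (H : Matrix (Fin k) (Fin n) ℝ) (S : Matrix (Fin n) (Fin n) ℝ) :
    trace (H * lap S * Hᵀ) =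
      (1/2) * ∑ i, ∑ j, ((|S i j| + |S j i|)/2) * (∑ l, (H l i - H l j)^2) := by
  have msymm : ∀ i j : Fin n, (|S i j| + |S j i|)/2 = (|S j i| + |S i j|)/2 :=
    fun i j => by ring
  set m : Fin n → Fin n → ℝ := fun i j => (|S i j| + |S j i|)/2 with hm
  set q : Fin n → Fin n → ℝ := fun i j => ∑ l, H l i * H l j with hq
  have hlap : ∀ i j, lap S i j = (if i = j then ∑ t, m i t else 0) - m i j := by
    intro i j
    simp only [lap, Matrix.sub_apply, Matrix.diagonal_apply, Matrix.smul_apply,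
      Matrix.add_apply, Matrix.transpose_apply, Matrix.map_apply, hm, smul_eq_mul]
    split_ifs <;> ring
  have expand : ∀ i j : Fin n, ∑ l, (H l i - H l j)^2 = q i i - 2 * q i j + q j j := by
    intro i j
    have h1 : ∀ l : Fin k, (H l i - H l j)^2
        = H l i * H l i - 2 * (H l i * H l j) + H l j * H l j := fun l => by ring
    rw [Finset.sum_congr rfl fun l _ => h1 l, Finset.sum_add_distrib,
      Finset.sum_sub_distrib, ← Finset.mul_sum]
  rw [trace_form]
  have hL : (∑ i, ∑ j, lap S i j * q i j)
      = (∑ i, ∑ j, m i j * q i i) - ∑ i, ∑ j, m i j * q i j := by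
    rw [← Finset.sum_sub_distrib]
    refine Finset.sum_congr rfl fun i _ => ?_
    rw [← Finset.sum_sub_distrib]
    have : ∀ j : Fin n, lap S i j * q i j
        = (if i = j then (∑ t, m i t) * q i j else 0) - m i j * q i j := by
      intro j
      rw [hlap, sub_mul, ite_mul, zero_mul]
    rw [Finset.sum_congr rfl fun j _ => this j, Finset.sum_sub_distrib,
      Finset.sum_ite_eq]
    simp [Finset.sum_mul]
  have key : (∑ i, ∑ j, m i j * q j j) = ∑ i, ∑ j, m i j * q i i := by
    rw [Finset.sum_comm]
    exact Finset.sum_congr rfl fun i _ => Finset.sum_congr rfl fun j _ => by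
      rw [hm]; dsimp only; rw [msymm]
  have hR : (1/2 : ℝ) * (∑ i, ∑ j, m i j * (∑ l, (H l i - H l j)^2))
      = (∑ i, ∑ j, m i j * q i i) - ∑ i, ∑ j, m i j * q i j := by
    have h2 : ∀ i j : Fin n, m i j * (∑ l, (H l i - H l j)^2)
        = (m i j * q i i - 2 * (m i j * q i j)) + m i j * q j j := by
      intro i j; rw [expand]; ring
    rw [Finset.sum_congr rfl fun i _ => Finset.sum_congr rfl fun j _ => h2 i j]
    simp only [Finset.sum_add_distrib, Finset.sum_sub_distrib, ← Finset.mul_sum]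
    rw [key]
    ring
  rw [hL, ← hR]

lemma mat_entry_tendsto {m n' : ℕ} {Bj : ℕ → Matrix (Fin m) (Fin n') ℝ}
    {B : Matrix (Fin m) (Fin n') ℝ} (h : Tendsto Bj atTop (𝓝 B)) (i : Fin m) (j : Fin n') :
    Tendsto (fun t => Bj t i j) atTop (𝓝 (B i j)) :=
  ((entry_continuous i j).tendsto B).comp h

lemma fObj_tendsto {n k d : ℕ} (X : Matrix (Fin d) (Fin n) ℝ)
    (W M C : Matrix (Fin n) (Fin n) ℝ) (lam lamZ lamM a1 a2 : ℝ)
    (Aj Zj : ℕ → Matrix (Fin n) (Fin n) ℝ) (Hj : ℕ → Matrix (Fin k) (Fin n) ℝ)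
    (Al Zl : Matrix (Fin n) (Fin n) ℝ) (Hl : Matrix (Fin k) (Fin n) ℝ)
    (hA : Tendsto Aj atTop (𝓝 Al)) (hZ : Tendsto Zj atTop (𝓝 Zl))
    (hH : Tendsto Hj atTop (𝓝 Hl))
    (hτ : trace (Hl * lap C * Hlᵀ) ≠ 0) :
    Tendsto (fun j => fObj X W M C lam lamZ lamM a1 a2 (Aj j) (Zj j) (Hj j)) atTop
      (𝓝 (fObj X W M C lam lamZ lamM a1 a2 Al Zl Hl)) := by
  have hXA : Tendsto (fun j => X - X * Aj j) atTop (𝓝 (X - X * Al)) := by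
    have hc : Continuous fun A : Matrix (Fin n) (Fin n) ℝ => X - X * A :=
      continuous_const.sub (continuous_const.matrix_mul continuous_id)
    exact (hc.tendsto Al).comp hA
  have t1 : Tendsto (fun j => frob (X - X * Aj j) ^ 2) atTop
      (𝓝 (frob (X - X * Al) ^ 2)) :=
    ((frob_continuous.pow 2).tendsto (X - X * Al)).comp hXA
  have t2 : Tendsto (fun j => frob (Aj j - Zj j) ^ 2) atTop
      (𝓝 (frob (Al - Zl) ^ 2)) :=
    ((frob_continuous.pow 2).tendsto (Al - Zl)).comp (hA.sub hZ)
  have t3 : Tendsto (fun j => ∑ i, ∑ j', |Zj j i j'|) atTop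
      (𝓝 (∑ i, ∑ j', |Zl i j'|)) :=
    tendsto_finset_sum _ fun i _ => tendsto_finset_sum _ fun j' _ =>
      (mat_entry_tendsto hZ i j').abs
  have hlapZ : Tendsto (fun j => lap (Zj j)) atTop (𝓝 (lap Zl)) :=
    (lap_continuous.tendsto Zl).comp hZ
  have t4 : Tendsto (fun j => trace (Hj j * lap (Zj j) * (Hj j)ᵀ)) atTop
      (𝓝 (trace (Hl * lap Zl * Hlᵀ))) := by
    simp only [trace_form]
    refine tendsto_finset_sum _ fun i _ => tendsto_finset_sum _ fun j' _ =>
      Tendsto.mul (mat_entry_tendsto hlapZ i j')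
        (tendsto_finset_sum _ fun l _ =>
          (mat_entry_tendsto hH l i).mul (mat_entry_tendsto hH l j'))
  have t5 : Tendsto (fun j => trace (Hj j * lap C * (Hj j)ᵀ)) atTop
      (𝓝 (trace (Hl * lap C * Hlᵀ))) := by
    simp only [trace_form]
    refine tendsto_finset_sum _ fun i _ => tendsto_finset_sum _ fun j' _ =>
      Tendsto.mul tendsto_const_nhds
        (tendsto_finset_sum _ fun l _ =>
          (mat_entry_tendsto hH l i).mul (mat_entry_tendsto hH l j'))
  have t6 : Tendsto (fun j => trace (Hj j * (lap W + lamM • lap M) * (Hj j)ᵀ)) atTop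
      (𝓝 (trace (Hl * (lap W + lamM • lap M) * Hlᵀ))) := by
    simp only [trace_form]
    refine tendsto_finset_sum _ fun i _ => tendsto_finset_sum _ fun j' _ =>
      Tendsto.mul tendsto_const_nhds
        (tendsto_finset_sum _ fun l _ =>
          (mat_entry_tendsto hH l i).mul (mat_entry_tendsto hH l j'))
  simp only [fObj]
  exact ((((tendsto_const_nhds.mul t1).add (tendsto_const_nhds.mul t2)).add
      (tendsto_const_nhds.mul t3)).add
      ((tendsto_const_nhds.mul t4).div t5 hτ)).add
      ((tendsto_const_nhds.mul t6).div t5 hτ)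

lemma antitone_tendsto {g : ℕ → ℝ} {L : ℝ} (hmono : ∀ t, g (t + 1) ≤ g t)
    (φ : ℕ → ℕ) (hφ : StrictMono φ) (h : Tendsto (fun j => g (φ j)) atTop (𝓝 L)) :
    Tendsto g atTop (𝓝 L) := by
  have hanti : Antitone g := antitone_nat_of_succ_le hmono
  have hlow : ∀ t, L ≤ g t := by
    intro t
    refine le_of_tendsto h ?_
    filter_upwards [eventually_ge_atTop t] with j hj
    exact hanti (le_trans hj (hφ.le_apply))
  rw [Metric.tendsto_atTop] at h ⊢
  intro ε hε
  obtain ⟨j0, hj0⟩ := h ε hε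
  refine ⟨φ j0, fun t ht => ?_⟩
  have h1 : g t ≤ g (φ j0) := hanti ht
  have h2 := hj0 j0 le_rfl
  have h3 := hlow t
  rw [Real.dist_eq] at h2 ⊢
  rw [abs_lt] at h2 ⊢
  constructor <;> linarith [h2.1, h2.2]

lemma frob_sq_mid {m n' : ℕ} (T U V D : Matrix (Fin m) (Fin n') ℝ)
    (hT : ∀ i j, T i j = (U i j + V i j) / 2)
    (hD : ∀ i j, (U i j - V i j) ^ 2 = (D i j) ^ 2) :
    frob T ^ 2 = frob U ^ 2 / 2 + frob V ^ 2 / 2 - frob D ^ 2 / 4 := by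
  have h : ∀ i j, (T i j) ^ 2
      = (U i j) ^ 2 / 2 + (V i j) ^ 2 / 2 - (D i j) ^ 2 / 4 := by
    intro i j
    rw [hT, ← hD]
    ring
  simp only [frob_sq]
  rw [Finset.sum_congr rfl fun i (_ : i ∈ Finset.univ) =>
    Finset.sum_congr rfl fun j (_ : j ∈ Finset.univ) => h i j]
  simp only [Finset.sum_add_distrib, Finset.sum_sub_distrib, ← Finset.sum_div]

lemma scA {n k d : ℕ} (X : Matrix (Fin d) (Fin n) ℝ) (W M C : Matrix (Fin n) (Fin n) ℝ)
    (lam lamZ lamM a1 a2 : ℝ)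
    (Z : Matrix (Fin n) (Fin n) ℝ) (H : Matrix (Fin k) (Fin n) ℝ)
    (Ahat : Matrix (Fin n) (Fin n) ℝ)
    (hmin : ∀ A, fObj X W M C lam lamZ lamM a1 a2 Ahat Z H
      ≤ fObj X W M C lam lamZ lamM a1 a2 A Z H)
    (A : Matrix (Fin n) (Fin n) ℝ) :
    fObj X W M C lam lamZ lamM a1 a2 Ahat Z H + (lam / 4) * frob (A - Ahat) ^ 2
      ≤ fObj X W M C lam lamZ lamM a1 a2 A Z H := by
  have h := hmin ((1 / 2 : ℝ) • (A + Ahat))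
  have e1 : frob (X - X * ((1 / 2 : ℝ) • (A + Ahat))) ^ 2
      = frob (X - X * A) ^ 2 / 2 + frob (X - X * Ahat) ^ 2 / 2
        - frob (X * Ahat - X * A) ^ 2 / 4 := by
    refine frob_sq_mid _ _ _ _ ?_ ?_
    · intro i j
      simp only [Matrix.sub_apply, Matrix.mul_apply, Matrix.smul_apply, Matrix.add_apply,
        smul_eq_mul]
      have hs : ∑ c, X i c * ((1 / 2 : ℝ) * (A c j + Ahat c j))
          = (∑ c, X i c * A c j) / 2 + (∑ c, X i c * Ahat c j) / 2 := by
        rw [Finset.sum_div, Finset.sum_div, ← Finset.sum_add_distrib]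
        exact Finset.sum_congr rfl fun c _ => by ring
      rw [hs]; ring
    · intro i j
      simp only [Matrix.sub_apply, Matrix.mul_apply]
      ring
  have e2 : frob ((1 / 2 : ℝ) • (A + Ahat) - Z) ^ 2
      = frob (A - Z) ^ 2 / 2 + frob (Ahat - Z) ^ 2 / 2 - frob (A - Ahat) ^ 2 / 4 := by
    refine frob_sq_mid _ _ _ _ ?_ ?_
    · intro i j
      simp only [Matrix.sub_apply, Matrix.smul_apply, Matrix.add_apply, smul_eq_mul]
      ring
    · intro i j
      simp only [Matrix.sub_apply]
      ring
  have hP : 0 ≤ frob (X * Ahat - X * A) ^ 2 := sq_nonneg _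
  simp only [fObj] at h ⊢
  rw [e1, e2] at h
  linarith

lemma scZ {n k d : ℕ} (X : Matrix (Fin d) (Fin n) ℝ) (W M C : Matrix (Fin n) (Fin n) ℝ)
    (lam lamZ lamM a1 a2 : ℝ) (hlamZ : 0 ≤ lamZ) (ha1 : 0 ≤ a1)
    (A : Matrix (Fin n) (Fin n) ℝ) (H : Matrix (Fin k) (Fin n) ℝ)
    (hτ : 0 < trace (H * lap C * Hᵀ))
    (Zhat : Matrix (Fin n) (Fin n) ℝ) (hZhat : ∀ i, Zhat i i = 0)
    (hmin : ∀ Z', (∀ i, Z' i i = 0) → fObj X W M C lam lamZ lamM a1 a2 A Zhat H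
      ≤ fObj X W M C lam lamZ lamM a1 a2 A Z' H)
    (Z : Matrix (Fin n) (Fin n) ℝ) (hZd : ∀ i, Z i i = 0) :
    fObj X W M C lam lamZ lamM a1 a2 A Zhat H + (lam / 4) * frob (Z - Zhat) ^ 2
      ≤ fObj X W M C lam lamZ lamM a1 a2 A Z H := by
  have hmdiag : ∀ i, ((1 / 2 : ℝ) • (Z + Zhat)) i i = 0 := by
    intro i
    simp [Matrix.smul_apply, Matrix.add_apply, hZd i, hZhat i]
  have h := hmin ((1 / 2 : ℝ) • (Z + Zhat)) hmdiag
  have e2 : frob (A - (1 / 2 : ℝ) • (Z + Zhat)) ^ 2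
      = frob (A - Z) ^ 2 / 2 + frob (A - Zhat) ^ 2 / 2 - frob (Z - Zhat) ^ 2 / 4 := by
    refine frob_sq_mid _ _ _ _ ?_ ?_
    · intro i j
      simp only [Matrix.sub_apply, Matrix.smul_apply, Matrix.add_apply, smul_eq_mul]
      ring
    · intro i j
      simp only [Matrix.sub_apply]
      ring
  have e3 : lamZ * (∑ i, ∑ j, |((1 / 2 : ℝ) • (Z + Zhat)) i j|)
      ≤ lamZ * ((∑ i, ∑ j, |Z i j|) / 2 + (∑ i, ∑ j, |Zhat i j|) / 2) := by
    refine mul_le_mul_of_nonneg_left ?_ hlamZ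
    have hpt : ∀ i j : Fin n, |((1 / 2 : ℝ) • (Z + Zhat)) i j|
        ≤ |Z i j| / 2 + |Zhat i j| / 2 := by
      intro i j
      simp only [Matrix.smul_apply, Matrix.add_apply, smul_eq_mul]
      rw [abs_mul, abs_of_nonneg (by norm_num : (0:ℝ) ≤ 1/2)]
      have := abs_add_le (Z i j) (Zhat i j)
      linarith
    calc (∑ i, ∑ j, |((1 / 2 : ℝ) • (Z + Zhat)) i j|)
        ≤ ∑ i, ∑ j, (|Z i j| / 2 + |Zhat i j| / 2) :=
          Finset.sum_le_sum fun i _ => Finset.sum_le_sum fun j _ => hpt i j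
      _ = (∑ i, ∑ j, |Z i j|) / 2 + (∑ i, ∑ j, |Zhat i j|) / 2 := by
          simp only [Finset.sum_add_distrib, ← Finset.sum_div]
  have e4 : trace (H * lap ((1 / 2 : ℝ) • (Z + Zhat)) * Hᵀ)
      ≤ trace (H * lap Z * Hᵀ) / 2 + trace (H * lap Zhat * Hᵀ) / 2 := by
    rw [trace_lap, trace_lap, trace_lap]
    have hpt : ∀ i j : Fin n,
        ((|((1 / 2 : ℝ) • (Z + Zhat)) i j| + |((1 / 2 : ℝ) • (Z + Zhat)) j i|) / 2)
            * (∑ l, (H l i - H l j) ^ 2)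
        ≤ (((|Z i j| + |Z j i|) / 2) * (∑ l, (H l i - H l j) ^ 2)) / 2
          + (((|Zhat i j| + |Zhat j i|) / 2) * (∑ l, (H l i - H l j) ^ 2)) / 2 := by
      intro i j
      have hw : 0 ≤ ∑ l, (H l i - H l j) ^ 2 :=
        Finset.sum_nonneg fun l _ => sq_nonneg _
      have hm : (|((1 / 2 : ℝ) • (Z + Zhat)) i j| + |((1 / 2 : ℝ) • (Z + Zhat)) j i|) / 2
          ≤ ((|Z i j| + |Z j i|) / 2) / 2 + ((|Zhat i j| + |Zhat j i|) / 2) / 2 := by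
        simp only [Matrix.smul_apply, Matrix.add_apply, smul_eq_mul]
        rw [abs_mul, abs_mul, abs_of_nonneg (by norm_num : (0:ℝ) ≤ 1/2)]
        have h1 := abs_add_le (Z i j) (Zhat i j)
        have h2 := abs_add_le (Z j i) (Zhat j i)
        linarith
      calc ((|((1 / 2 : ℝ) • (Z + Zhat)) i j| + |((1 / 2 : ℝ) • (Z + Zhat)) j i|) / 2)
              * (∑ l, (H l i - H l j) ^ 2)
          ≤ (((|Z i j| + |Z j i|) / 2) / 2 + ((|Zhat i j| + |Zhat j i|) / 2) / 2)
              * (∑ l, (H l i - H l j) ^ 2) :=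
            mul_le_mul_of_nonneg_right hm hw
        _ = (((|Z i j| + |Z j i|) / 2) * (∑ l, (H l i - H l j) ^ 2)) / 2
          + (((|Zhat i j| + |Zhat j i|) / 2) * (∑ l, (H l i - H l j) ^ 2)) / 2 := by
            ring
    have hsum : (∑ i, ∑ j, ((|((1 / 2 : ℝ) • (Z + Zhat)) i j|
            + |((1 / 2 : ℝ) • (Z + Zhat)) j i|) / 2) * (∑ l, (H l i - H l j) ^ 2))
        ≤ (∑ i, ∑ j, ((|Z i j| + |Z j i|) / 2) * (∑ l, (H l i - H l j) ^ 2)) / 2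
          + (∑ i, ∑ j, ((|Zhat i j| + |Zhat j i|) / 2) * (∑ l, (H l i - H l j) ^ 2)) / 2 := by
      calc (∑ i, ∑ j, ((|((1 / 2 : ℝ) • (Z + Zhat)) i j|
            + |((1 / 2 : ℝ) • (Z + Zhat)) j i|) / 2) * (∑ l, (H l i - H l j) ^ 2))
          ≤ ∑ i, ∑ j, ((((|Z i j| + |Z j i|) / 2) * (∑ l, (H l i - H l j) ^ 2)) / 2
            + (((|Zhat i j| + |Zhat j i|) / 2) * (∑ l, (H l i - H l j) ^ 2)) / 2) :=
            Finset.sum_le_sum fun i _ => Finset.sum_le_sum fun j _ => hpt i j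
        _ = _ := by simp only [Finset.sum_add_distrib, ← Finset.sum_div]
    linarith
  have e5 : a1 * trace (H * lap ((1 / 2 : ℝ) • (Z + Zhat)) * Hᵀ) / trace (H * lap C * Hᵀ)
      ≤ (a1 * trace (H * lap Z * Hᵀ) / trace (H * lap C * Hᵀ)) / 2
        + (a1 * trace (H * lap Zhat * Hᵀ) / trace (H * lap C * Hᵀ)) / 2 := by
    have h1 : a1 * trace (H * lap ((1 / 2 : ℝ) • (Z + Zhat)) * Hᵀ)
        ≤ a1 * (trace (H * lap Z * Hᵀ) / 2 + trace (H * lap Zhat * Hᵀ) / 2) :=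
      mul_le_mul_of_nonneg_left e4 ha1
    calc a1 * trace (H * lap ((1 / 2 : ℝ) • (Z + Zhat)) * Hᵀ) / trace (H * lap C * Hᵀ)
        ≤ a1 * (trace (H * lap Z * Hᵀ) / 2 + trace (H * lap Zhat * Hᵀ) / 2)
            / trace (H * lap C * Hᵀ) := by
          exact (div_le_div_iff_of_pos_right hτ).mpr h1
      _ = (a1 * trace (H * lap Z * Hᵀ) / trace (H * lap C * Hᵀ)) / 2
        + (a1 * trace (H * lap Zhat * Hᵀ) / trace (H * lap C * Hᵀ)) / 2 := by ring
  simp only [fObj] at h ⊢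
  rw [e2] at h
  linarith

theorem dgsl_limit_points_are_coordinatewise_minimizers (n k d : ℕ) (hn : 0 < n) (hk : 0 < k) (hd : 0 < d)
    (X : Matrix (Fin d) (Fin n) ℝ) (W M C : Matrix (Fin n) (Fin n) ℝ)
    (lam lamZ lamM a1 a2 : ℝ) (hlam : 0 < lam) (hlamZ : 0 < lamZ)
    (hlamM : 0 < lamM) (ha1 : 0 < a1) (ha2 : 0 < a2)
    (hC : ∀ H : Matrix (Fin k) (Fin n) ℝ, H * Hᵀ = 1 → 0 < trace (H * lap C * Hᵀ))
    (Aseq Zseq : ℕ → Matrix (Fin n) (Fin n) ℝ)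
    (Hseq : ℕ → Matrix (Fin k) (Fin n) ℝ)
    (hZ0 : ∀ i, Zseq 0 i i = 0) (hH0 : Hseq 0 * (Hseq 0)ᵀ = 1)
    (hHstep : ∀ t : ℕ, Hseq (t + 1) * (Hseq (t + 1))ᵀ = 1 ∧
      ∀ H : Matrix (Fin k) (Fin n) ℝ, H * Hᵀ = 1 →
        fObj X W M C lam lamZ lamM a1 a2 (Aseq t) (Zseq t) (Hseq (t + 1))
          ≤ fObj X W M C lam lamZ lamM a1 a2 (Aseq t) (Zseq t) H)
    (hAstep : ∀ (t : ℕ) (A : Matrix (Fin n) (Fin n) ℝ),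
      fObj X W M C lam lamZ lamM a1 a2 (Aseq (t + 1)) (Zseq t) (Hseq (t + 1))
        ≤ fObj X W M C lam lamZ lamM a1 a2 A (Zseq t) (Hseq (t + 1)))
    (hZstep : ∀ t : ℕ, (∀ i, Zseq (t + 1) i i = 0) ∧
      ∀ Z : Matrix (Fin n) (Fin n) ℝ, (∀ i, Z i i = 0) →
        fObj X W M C lam lamZ lamM a1 a2 (Aseq (t + 1)) (Zseq (t + 1)) (Hseq (t + 1))
          ≤ fObj X W M C lam lamZ lamM a1 a2 (Aseq (t + 1)) Z (Hseq (t + 1)))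
    (Astar Zstar : Matrix (Fin n) (Fin n) ℝ) (Hstar : Matrix (Fin k) (Fin n) ℝ)
    (φ : ℕ → ℕ) (hφ : StrictMono φ)
    (hAlim : Tendsto (fun j : ℕ => frob (Aseq (φ j) - Astar)) atTop (𝓝 0))
    (hZlim : Tendsto (fun j : ℕ => frob (Zseq (φ j) - Zstar)) atTop (𝓝 0))
    (hHlim : Tendsto (fun j : ℕ => frob (Hseq (φ j) - Hstar)) atTop (𝓝 0)) :
    (∀ i, Zstar i i = 0) ∧ Hstar * Hstarᵀ = 1 ∧
      (∀ H : Matrix (Fin k) (Fin n) ℝ, H * Hᵀ = 1 →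
        fObj X W M C lam lamZ lamM a1 a2 Astar Zstar Hstar
          ≤ fObj X W M C lam lamZ lamM a1 a2 Astar Zstar H) ∧
      (∀ A : Matrix (Fin n) (Fin n) ℝ,
        fObj X W M C lam lamZ lamM a1 a2 Astar Zstar Hstar
          ≤ fObj X W M C lam lamZ lamM a1 a2 A Zstar Hstar) ∧
      ∀ Z : Matrix (Fin n) (Fin n) ℝ, (∀ i, Z i i = 0) →
        fObj X W M C lam lamZ lamM a1 a2 Astar Zstar Hstar
          ≤ fObj X W M C lam lamZ lamM a1 a2 Astar Z Hstar := by
  -- basic facts along the sequence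
  have hS2 : ∀ t, Hseq t * (Hseq t)ᵀ = 1 := by
    intro t
    cases t with
    | zero => exact hH0
    | succ t => exact (hHstep t).1
  have hdiag : ∀ t i, Zseq t i i = 0 := by
    intro t
    cases t with
    | zero => exact hZ0
    | succ t => exact (hZstep t).1
  -- convergence in the matrix topology
  have hAt : Tendsto (fun j => Aseq (φ j)) atTop (𝓝 Astar) := tendsto_of_frob _ _ hAlim
  have hZt : Tendsto (fun j => Zseq (φ j)) atTop (𝓝 Zstar) := tendsto_of_frob _ _ hZlim
  have hHt : Tendsto (fun j => Hseq (φ j)) atTop (𝓝 Hstar) := tendsto_of_frob _ _ hHlim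
  -- Hstar is orthonormal
  have HstarS2 : Hstar * Hstarᵀ = 1 := by
    have hc : Continuous fun H0 : Matrix (Fin k) (Fin n) ℝ => H0 * H0ᵀ :=
      continuous_id.matrix_mul continuous_id.matrix_transpose
    have h1 : Tendsto (fun j => Hseq (φ j) * (Hseq (φ j))ᵀ) atTop (𝓝 (Hstar * Hstarᵀ)) :=
      (hc.tendsto Hstar).comp hHt
    have h2 : (fun j => Hseq (φ j) * (Hseq (φ j))ᵀ)
        = fun _ => (1 : Matrix (Fin k) (Fin k) ℝ) := funext fun j => hS2 (φ j)
    rw [h2] at h1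
    exact tendsto_nhds_unique h1 tendsto_const_nhds
  -- Zstar has zero diagonal
  have ZstarDiag : ∀ i, Zstar i i = 0 := by
    intro i
    have h1 := mat_entry_tendsto hZt i i
    have h2 : (fun j => Zseq (φ j) i i) = fun _ => (0 : ℝ) :=
      funext fun j => hdiag (φ j) i
    rw [h2] at h1
    exact tendsto_nhds_unique h1 tendsto_const_nhds
  have τne : trace (Hstar * lap C * Hstarᵀ) ≠ 0 := ne_of_gt (hC Hstar HstarS2)
  -- monotone decrease of the objective along the iterations
  have hchain1 : ∀ t, fObj X W M C lam lamZ lamM a1 a2 (Aseq t) (Zseq t) (Hseq (t + 1))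
      ≤ fObj X W M C lam lamZ lamM a1 a2 (Aseq t) (Zseq t) (Hseq t) :=
    fun t => (hHstep t).2 (Hseq t) (hS2 t)
  have hchain2 : ∀ t, fObj X W M C lam lamZ lamM a1 a2 (Aseq (t+1)) (Zseq t) (Hseq (t + 1))
      ≤ fObj X W M C lam lamZ lamM a1 a2 (Aseq t) (Zseq t) (Hseq (t + 1)) :=
    fun t => hAstep t (Aseq t)
  have hchain3 : ∀ t, fObj X W M C lam lamZ lamM a1 a2 (Aseq (t+1)) (Zseq (t+1)) (Hseq (t + 1))
      ≤ fObj X W M C lam lamZ lamM a1 a2 (Aseq (t+1)) (Zseq t) (Hseq (t + 1)) :=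
    fun t => (hZstep t).2 (Zseq t) (hdiag t)
  have hFdec : ∀ t, fObj X W M C lam lamZ lamM a1 a2 (Aseq (t+1)) (Zseq (t+1)) (Hseq (t + 1))
      ≤ fObj X W M C lam lamZ lamM a1 a2 (Aseq t) (Zseq t) (Hseq t) :=
    fun t => le_trans (le_trans (hchain3 t) (hchain2 t)) (hchain1 t)
  -- value convergence
  have hFφ : Tendsto (fun j => fObj X W M C lam lamZ lamM a1 a2
      (Aseq (φ j)) (Zseq (φ j)) (Hseq (φ j))) atTop
      (𝓝 (fObj X W M C lam lamZ lamM a1 a2 Astar Zstar Hstar)) :=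
    fObj_tendsto X W M C lam lamZ lamM a1 a2 _ _ _ _ _ _ hAt hZt hHt τne
  have hF : Tendsto (fun t => fObj X W M C lam lamZ lamM a1 a2
      (Aseq t) (Zseq t) (Hseq t)) atTop
      (𝓝 (fObj X W M C lam lamZ lamM a1 a2 Astar Zstar Hstar)) :=
    antitone_tendsto hFdec φ hφ hFφ
  have hF1 : Tendsto (fun t => fObj X W M C lam lamZ lamM a1 a2
      (Aseq (t+1)) (Zseq (t+1)) (Hseq (t+1))) atTop
      (𝓝 (fObj X W M C lam lamZ lamM a1 a2 Astar Zstar Hstar)) :=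
    hF.comp (tendsto_add_atTop_nat 1)
  have hdiff : Tendsto (fun t => fObj X W M C lam lamZ lamM a1 a2 (Aseq t) (Zseq t) (Hseq t)
      - fObj X W M C lam lamZ lamM a1 a2 (Aseq (t+1)) (Zseq (t+1)) (Hseq (t+1))) atTop
      (𝓝 0) := by
    have := hF.sub hF1
    simpa using this
  -- asymptotic regularity via strong convexity
  have hAle : ∀ t, (lam / 4) * frob (Aseq t - Aseq (t+1)) ^ 2
      ≤ fObj X W M C lam lamZ lamM a1 a2 (Aseq t) (Zseq t) (Hseq t)
        - fObj X W M C lam lamZ lamM a1 a2 (Aseq (t+1)) (Zseq (t+1)) (Hseq (t+1)) := by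
    intro t
    have hsc := scA X W M C lam lamZ lamM a1 a2 (Zseq t) (Hseq (t+1)) (Aseq (t+1))
      (hAstep t) (Aseq t)
    have h1 := hchain1 t
    have h3 := hchain3 t
    linarith
  have hZle : ∀ t, (lam / 4) * frob (Zseq t - Zseq (t+1)) ^ 2
      ≤ fObj X W M C lam lamZ lamM a1 a2 (Aseq t) (Zseq t) (Hseq t)
        - fObj X W M C lam lamZ lamM a1 a2 (Aseq (t+1)) (Zseq (t+1)) (Hseq (t+1)) := by
    intro t
    have hsc := scZ X W M C lam lamZ lamM a1 a2 hlamZ.le ha1.le (Aseq (t+1)) (Hseq (t+1))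
      (hC _ (hS2 (t+1))) (Zseq (t+1)) (hdiag (t+1)) (hZstep t).2 (Zseq t) (hdiag t)
    have h1 := hchain1 t
    have h2 := hchain2 t
    linarith
  have frob_reg : ∀ (B : ℕ → Matrix (Fin n) (Fin n) ℝ),
      (∀ t, (lam / 4) * frob (B t - B (t+1)) ^ 2
        ≤ fObj X W M C lam lamZ lamM a1 a2 (Aseq t) (Zseq t) (Hseq t)
          - fObj X W M C lam lamZ lamM a1 a2 (Aseq (t+1)) (Zseq (t+1)) (Hseq (t+1))) →
      Tendsto (fun t => B t - B (t+1)) atTop (𝓝 0) := by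
    intro B hle
    have hsq : Tendsto (fun t => (lam / 4) * frob (B t - B (t+1)) ^ 2) atTop (𝓝 0) :=
      squeeze_zero (fun t => mul_nonneg (by linarith) (sq_nonneg _)) hle hdiff
    have h2 : Tendsto (fun t => frob (B t - B (t+1)) ^ 2) atTop (𝓝 0) := by
      have h4 : (fun t => frob (B t - B (t+1)) ^ 2)
          = fun t => (4 / lam) * ((lam / 4) * frob (B t - B (t+1)) ^ 2) := by
        funext t
        field_simp
      rw [h4]
      simpa using hsq.const_mul (4 / lam)
    have h5 : Tendsto (fun t => frob (B t - B (t+1))) atTop (𝓝 0) := by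
      have h6 : (fun t => frob (B t - B (t+1)))
          = fun t => Real.sqrt (frob (B t - B (t+1)) ^ 2) :=
        funext fun t => (Real.sqrt_sq (frob_nonneg _)).symm
      rw [h6]
      have := (Real.continuous_sqrt.tendsto 0).comp h2
      simpa [Function.comp_def] using this
    exact tendsto_of_frob _ 0 (by simpa using h5)
  have mdA := frob_reg Aseq hAle
  have mdZ := frob_reg Zseq hZle
  -- the shifted subsequence ψ j = φ (j+1) - 1
  set ψ : ℕ → ℕ := fun j => φ (j + 1) - 1 with hψdef
  have hψ1 : ∀ j, ψ j + 1 = φ (j + 1) := fun j =>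
    Nat.succ_pred_eq_of_pos (lt_of_lt_of_le (Nat.succ_pos j) hφ.le_apply)
  have hψtop : Tendsto ψ atTop atTop := by
    refine tendsto_atTop_mono (fun j => ?_) tendsto_id
    exact Nat.le_pred_of_lt (lt_of_lt_of_le (Nat.lt_succ_self j) hφ.le_apply)
  have hA1t : Tendsto (fun j => Aseq (φ (j+1))) atTop (𝓝 Astar) :=
    hAt.comp (tendsto_add_atTop_nat 1)
  have hZ1t : Tendsto (fun j => Zseq (φ (j+1))) atTop (𝓝 Zstar) :=
    hZt.comp (tendsto_add_atTop_nat 1)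
  have hH1t : Tendsto (fun j => Hseq (φ (j+1))) atTop (𝓝 Hstar) :=
    hHt.comp (tendsto_add_atTop_nat 1)
  have hAsucc : Tendsto (fun j => Aseq (ψ j + 1)) atTop (𝓝 Astar) := by
    simp only [hψ1]; exact hA1t
  have hZsucc : Tendsto (fun j => Zseq (ψ j + 1)) atTop (𝓝 Zstar) := by
    simp only [hψ1]; exact hZ1t
  have hAψ : Tendsto (fun j => Aseq (ψ j)) atTop (𝓝 Astar) := by
    have h6 := (mdA.comp hψtop).add hAsucc
    simp only [Function.comp, sub_add_cancel] at h6
    simpa using h6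
  have hZψ : Tendsto (fun j => Zseq (ψ j)) atTop (𝓝 Zstar) := by
    have h6 := (mdZ.comp hψtop).add hZsucc
    simp only [Function.comp, sub_add_cancel] at h6
    simpa using h6
  refine ⟨ZstarDiag, HstarS2, ?_, ?_, ?_⟩
  · -- H-coordinatewise minimality
    intro H hHS
    have hLHS : Tendsto (fun j => fObj X W M C lam lamZ lamM a1 a2
        (Aseq (ψ j)) (Zseq (ψ j)) (Hseq (φ (j+1)))) atTop
        (𝓝 (fObj X W M C lam lamZ lamM a1 a2 Astar Zstar Hstar)) :=
      fObj_tendsto X W M C lam lamZ lamM a1 a2 _ _ _ _ _ _ hAψ hZψ hH1t τne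
    have hRHS : Tendsto (fun j => fObj X W M C lam lamZ lamM a1 a2
        (Aseq (ψ j)) (Zseq (ψ j)) H) atTop
        (𝓝 (fObj X W M C lam lamZ lamM a1 a2 Astar Zstar H)) :=
      fObj_tendsto X W M C lam lamZ lamM a1 a2 _ _ _ _ _ _ hAψ hZψ tendsto_const_nhds
        (ne_of_gt (hC H hHS))
    refine le_of_tendsto_of_tendsto' hLHS hRHS fun j => ?_
    have h7 := (hHstep (ψ j)).2 H hHS
    rwa [hψ1 j] at h7
  · -- A-coordinatewise minimality
    intro A
    have hLHS : Tendsto (fun j => fObj X W M C lam lamZ lamM a1 a2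
        (Aseq (φ (j+1))) (Zseq (ψ j)) (Hseq (φ (j+1)))) atTop
        (𝓝 (fObj X W M C lam lamZ lamM a1 a2 Astar Zstar Hstar)) :=
      fObj_tendsto X W M C lam lamZ lamM a1 a2 _ _ _ _ _ _ hA1t hZψ hH1t τne
    have hRHS : Tendsto (fun j => fObj X W M C lam lamZ lamM a1 a2
        A (Zseq (ψ j)) (Hseq (φ (j+1)))) atTop
        (𝓝 (fObj X W M C lam lamZ lamM a1 a2 A Zstar Hstar)) :=
      fObj_tendsto X W M C lam lamZ lamM a1 a2 _ _ _ _ _ _ tendsto_const_nhds hZψ hH1t τne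
    refine le_of_tendsto_of_tendsto' hLHS hRHS fun j => ?_
    have h7 := hAstep (ψ j) A
    rwa [hψ1 j] at h7
  · -- Z-coordinatewise minimality
    intro Z hZd
    have hLHS : Tendsto (fun j => fObj X W M C lam lamZ lamM a1 a2
        (Aseq (φ (j+1))) (Zseq (φ (j+1))) (Hseq (φ (j+1)))) atTop
        (𝓝 (fObj X W M C lam lamZ lamM a1 a2 Astar Zstar Hstar)) :=
      fObj_tendsto X W M C lam lamZ lamM a1 a2 _ _ _ _ _ _ hA1t hZ1t hH1t τne
    have hRHS : Tendsto (fun j => fObj X W M C lam lamZ lamM a1 a2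
        (Aseq (φ (j+1))) Z (Hseq (φ (j+1)))) atTop
        (𝓝 (fObj X W M C lam lamZ lamM a1 a2 Astar Z Hstar)) :=
      fObj_tendsto X W M C lam lamZ lamM a1 a2 _ _ _ _ _ _ hA1t tendsto_const_nhds hH1t τne
    refine le_of_tendsto_of_tendsto' hLHS hRHS fun j => ?_
    have h7 := (hZstep (ψ j)).2 Z hZd
    rwa [hψ1 j] at h7
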